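/- arXiv:2002.08483 — 5 statements merged into one kernel-verified Lean document; each statement's English description precedes it below -/
import Mathlib

section
/- Suppose the weak loss ℓ^weak is symmetric and satisfies the triangle inequality. Let g* ∈ G be a minimizer over G of g ↦ E_P[ℓ^weak(β_gᵀ g(X), W)], let f* : X×Z → Y be L-Lipschitz relative to G, and let ĝ ∈ G and f̂ : X×Z → Y be arbitrary. Then the excess risk satisfies E_P[ℓ(f̂(X, ĝ(X)), Y) − ℓ(f*(X, g*(X)), Y)] ≤ 2L·E_P[ℓ^weak(β_ĝᵀ ĝ(X), W)] + E_P[ℓ(f̂(X, ĝ(X)), Y) − ℓ(f*(X, ĝ(X)), Y)]. -/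
open MeasureTheory

/-- Excess risk decomposition (Proposition 1 of the paper): if `f*` is `L`-Lipschitz relative
to `G`, the weak loss is a symmetric function satisfying the triangle inequality,
`β_{g₀}ᵀ g₀(X) = W` a.s. and `g*` minimizes the weak risk over `G`, then
`E[ℓ(f̂(X, ĝ(X)), Y) − ℓ(f*(X, g*(X)), Y)]
  ≤ 2L·E[ℓʷ(β_ĝᵀ ĝ(X), W)] + E[ℓ(f̂(X, ĝ(X)), Y) − ℓ(f*(X, ĝ(X)), Y)]`.
Here `wp g : 𝓧 → 𝓦` denotes the weak predictor `x ↦ β_gᵀ g(x)` associated with `g ∈ G`. -/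
theorem excess_risk_decomposition
    {𝓧 𝓦 𝓨 𝓩 : Type*} [MeasurableSpace 𝓧] [MeasurableSpace 𝓦] [MeasurableSpace 𝓨]
    (P : Measure (𝓧 × 𝓦 × 𝓨)) [IsProbabilityMeasure P]
    (ℓ : 𝓨 → 𝓨 → ℝ) (ℓw : 𝓦 → 𝓦 → ℝ)
    (hℓ_nonneg : ∀ y y', 0 ≤ ℓ y y')
    (hℓw_nonneg : ∀ w w', 0 ≤ ℓw w w')
    (hℓw_symm : ∀ w w', ℓw w w' = ℓw w' w)
    (hℓw_tri : ∀ w₁ w₂ w₃, ℓw w₁ w₃ ≤ ℓw w₁ w₂ + ℓw w₂ w₃)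
    (G : Set (𝓧 → 𝓩)) (wp : (𝓧 → 𝓩) → 𝓧 → 𝓦)
    (g₀ : 𝓧 → 𝓩) (hg₀ : g₀ ∈ G)
    (hg₀W : ∀ᵐ u ∂P, wp g₀ u.1 = u.2.1)
    (L : ℝ) (hL : 0 ≤ L)
    (gstar : 𝓧 → 𝓩) (hgstar : gstar ∈ G)
    (hgstar_min : ∀ g ∈ G,
      ∫ u, ℓw (wp gstar u.1) u.2.1 ∂P ≤ ∫ u, ℓw (wp g u.1) u.2.1 ∂P)
    (fstar : 𝓧 → 𝓩 → 𝓨)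
    (hfstar_lip : ∀ x y, ∀ g ∈ G, ∀ g' ∈ G,
      |ℓ (fstar x (g x)) y - ℓ (fstar x (g' x)) y| ≤ L * ℓw (wp g x) (wp g' x))
    (ghat : 𝓧 → 𝓩) (hghat : ghat ∈ G) (fhat : 𝓧 → 𝓩 → 𝓨)
    (hI1 : Integrable (fun u => ℓ (fhat u.1 (ghat u.1)) u.2.2) P)
    (hI2 : Integrable (fun u => ℓ (fstar u.1 (ghat u.1)) u.2.2) P)
    (hI3 : Integrable (fun u => ℓ (fstar u.1 (g₀ u.1)) u.2.2) P)
    (hI4 : Integrable (fun u => ℓ (fstar u.1 (gstar u.1)) u.2.2) P)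
    (hIw : Integrable (fun u => ℓw (wp ghat u.1) u.2.1) P)
    (hIwstar : Integrable (fun u => ℓw (wp gstar u.1) u.2.1) P) :
    ∫ u, (ℓ (fhat u.1 (ghat u.1)) u.2.2 - ℓ (fstar u.1 (gstar u.1)) u.2.2) ∂P ≤
      2 * L * ∫ u, ℓw (wp ghat u.1) u.2.1 ∂P +
        ∫ u, (ℓ (fhat u.1 (ghat u.1)) u.2.2 - ℓ (fstar u.1 (ghat u.1)) u.2.2) ∂P := by
  have key : ∫ u, (ℓ (fstar u.1 (ghat u.1)) u.2.2 - ℓ (fstar u.1 (gstar u.1)) u.2.2) ∂P ≤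
      2 * L * ∫ u, ℓw (wp ghat u.1) u.2.1 ∂P := by
    have hb : ∀ᵐ u ∂P, ℓ (fstar u.1 (ghat u.1)) u.2.2 - ℓ (fstar u.1 (gstar u.1)) u.2.2 ≤
        L * ℓw (wp ghat u.1) u.2.1 + L * ℓw (wp gstar u.1) u.2.1 := by
      filter_upwards [hg₀W] with u hu
      have h1 := hfstar_lip u.1 u.2.2 ghat hghat gstar hgstar
      have htr := hℓw_tri (wp ghat u.1) (wp g₀ u.1) (wp gstar u.1)
      rw [hu] at htr
      have hsym := hℓw_symm u.2.1 (wp gstar u.1)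
      have h2 : ℓ (fstar u.1 (ghat u.1)) u.2.2 - ℓ (fstar u.1 (gstar u.1)) u.2.2 ≤
          L * ℓw (wp ghat u.1) (wp gstar u.1) := le_trans (le_abs_self _) h1
      nlinarith [mul_le_mul_of_nonneg_left htr hL]
    have hmono := integral_mono_ae (hI2.sub hI4)
      ((hIw.const_mul L).add (hIwstar.const_mul L)) hb
    simp only [Pi.sub_apply, Pi.add_apply] at hmono
    rw [integral_add (hIw.const_mul L) (hIwstar.const_mul L),
      integral_const_mul, integral_const_mul] at hmono
    have hmin := hgstar_min ghat hghat
    have := mul_le_mul_of_nonneg_left hmin hL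
    linarith
  rw [integral_sub hI1 hI4, integral_sub hI1 hI2]
  rw [integral_sub hI2 hI4] at key
  linarith
end

section
/- Suppose ℓ^weak(w,w') = 1{w ≠ w'}, the loss ℓ takes values in [0,B] for some B > 0, every f ∈ F is L-Lipschitz relative to G for some L > 0, and (ℓ, P_{g₀}, F) satisfies the ε-weak η-central condition with witness f* ∈ F. Then for every ĝ ∈ G and every f ∈ F, (1/η)·log E_P[exp(−η(ℓ(f(X, ĝ(X)), Y) − ℓ(f*(X, ĝ(X)), Y)))] ≤ ε + (e^{ηB}/η)·P(β_ĝᵀ ĝ(X) ≠ W); in particular, (ℓ, P̂, F) satisfies the (ε + (e^{ηB}/η)·P(β_ĝᵀ ĝ(X) ≠ W))-weak η-central condition with the same witness f*. -/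
open MeasureTheory

/-- Transfer of the weak central condition, categorical weak labels (Proposition 2 of the
paper): if `ℓʷ(w,w') = 1{w ≠ w'}`, `ℓ` takes values in `[0,B]`, every `f ∈ F` is
`L`-Lipschitz relative to `G`, and `(ℓ, P_{g₀}, F)` satisfies the `ε`-weak `η`-central
condition with witness `f*`, then for every `ĝ ∈ G` and every `f ∈ F`,
`(1/η)·log E[exp(−η(ℓ_{f(·,ĝ)} − ℓ_{f*(·,ĝ)}))] ≤ ε + (e^{ηB}/η)·P(β_ĝᵀ ĝ(X) ≠ W)`;
i.e. `(ℓ, P̂, F)` satisfies the corresponding weak `η`-central condition with witness `f*`.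
Here `wp g : 𝓧 → 𝓦` denotes the weak predictor `x ↦ β_gᵀ g(x)` associated with `g ∈ G`. -/
theorem weak_central_condition_transfer_categorical
    {𝓧 𝓦 𝓨 𝓩 : Type*} [MeasurableSpace 𝓧] [MeasurableSpace 𝓦] [MeasurableSpace 𝓨]
    [DecidableEq 𝓦]
    (P : Measure (𝓧 × 𝓦 × 𝓨)) [IsProbabilityMeasure P]
    (ℓ : 𝓨 → 𝓨 → ℝ) (B : ℝ) (hB : 0 < B)
    (hℓ : ∀ y y', ℓ y y' ∈ Set.Icc 0 B)
    (ℓw : 𝓦 → 𝓦 → ℝ)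
    (hℓw : ∀ w w', ℓw w w' = if w = w' then 0 else 1)
    (G : Set (𝓧 → 𝓩)) (wp : (𝓧 → 𝓩) → 𝓧 → 𝓦)
    (g₀ : 𝓧 → 𝓩) (hg₀ : g₀ ∈ G)
    (hg₀W : ∀ᵐ u ∂P, wp g₀ u.1 = u.2.1)
    (F : Set (𝓧 → 𝓩 → 𝓨)) (L : ℝ) (hL : 0 < L)
    (hLip : ∀ f ∈ F, ∀ x y, ∀ g ∈ G, ∀ g' ∈ G,
      |ℓ (f x (g x)) y - ℓ (f x (g' x)) y| ≤ L * ℓw (wp g x) (wp g' x))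
    (η ε : ℝ) (hη : 0 < η) (hε : 0 ≤ ε)
    (fstar : 𝓧 → 𝓩 → 𝓨) (hfstar : fstar ∈ F)
    (hInt : ∀ f ∈ F, ∀ g ∈ G, Integrable
      (fun u => Real.exp (-η * (ℓ (f u.1 (g u.1)) u.2.2 - ℓ (fstar u.1 (g u.1)) u.2.2))) P)
    (hcentral : ∀ f ∈ F,
      ∫ u, Real.exp (-η * (ℓ (f u.1 (g₀ u.1)) u.2.2 - ℓ (fstar u.1 (g₀ u.1)) u.2.2)) ∂P
        ≤ Real.exp (η * ε)) :
    ∀ ghat ∈ G, ∀ f ∈ F,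
      (1 / η) * Real.log (∫ u,
          Real.exp (-η * (ℓ (f u.1 (ghat u.1)) u.2.2 - ℓ (fstar u.1 (ghat u.1)) u.2.2)) ∂P)
        ≤ ε + (Real.exp (η * B) / η) * (P {u | wp ghat u.1 ≠ u.2.1}).toReal := by
  intro ghat hghat f hf
  set c := Real.exp (η * B) with hc
  have hc0 : 0 < c := Real.exp_pos _
  set E : Set (𝓧 × 𝓦 × 𝓨) := {u | wp ghat u.1 ≠ u.2.1} with hE
  set E' := toMeasurable P E with hE'
  set h1 : 𝓧 × 𝓦 × 𝓨 → ℝ := fun u =>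
    Real.exp (-η * (ℓ (f u.1 (ghat u.1)) u.2.2 - ℓ (fstar u.1 (ghat u.1)) u.2.2)) with hh1
  set h2 : 𝓧 × 𝓦 × 𝓨 → ℝ := fun u =>
    Real.exp (-η * (ℓ (f u.1 (g₀ u.1)) u.2.2 - ℓ (fstar u.1 (g₀ u.1)) u.2.2)) with hh2
  have hint1 : Integrable h1 P := hInt f hf ghat hghat
  have hint2 : Integrable h2 P := hInt f hf g₀ hg₀
  set p := (P E).toReal with hp
  have hp0 : 0 ≤ p := ENNReal.toReal_nonneg
  have hbound : ∀ᵐ u ∂P, h1 u - h2 u ≤ E'.indicator (fun _ => c) u := by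
    filter_upwards [hg₀W] with u hu
    by_cases hmem : u ∈ E
    · have hind : E'.indicator (fun _ => c) u = c :=
        Set.indicator_of_mem (subset_toMeasurable P E hmem) _
      rw [hind]
      have hb1 : h1 u ≤ c := by
        simp only [hh1, hc]
        apply Real.exp_le_exp.mpr
        have l1 := hℓ (f u.1 (ghat u.1)) u.2.2
        have l2 := hℓ (fstar u.1 (ghat u.1)) u.2.2
        nlinarith [l1.1, l1.2, l2.1, l2.2, hη.le]
      have hb2 : 0 < h2 u := Real.exp_pos _
      linarith
    · have heq : wp ghat u.1 = wp g₀ u.1 := by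
        simp only [hE, Set.mem_setOf_eq, not_not] at hmem
        rw [hmem, hu]
      have hw : ℓw (wp ghat u.1) (wp g₀ u.1) = 0 := by rw [hℓw]; simp [heq]
      have e1 : ℓ (f u.1 (ghat u.1)) u.2.2 = ℓ (f u.1 (g₀ u.1)) u.2.2 := by
        have h := hLip f hf u.1 u.2.2 ghat hghat g₀ hg₀
        rw [hw, mul_zero] at h
        exact sub_eq_zero.mp (abs_nonpos_iff.mp h)
      have e2 : ℓ (fstar u.1 (ghat u.1)) u.2.2 = ℓ (fstar u.1 (g₀ u.1)) u.2.2 := by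
        have h := hLip fstar hfstar u.1 u.2.2 ghat hghat g₀ hg₀
        rw [hw, mul_zero] at h
        exact sub_eq_zero.mp (abs_nonpos_iff.mp h)
      have : h1 u = h2 u := by simp only [hh1, hh2, e1, e2]
      have hind : 0 ≤ E'.indicator (fun _ => c) u :=
        Set.indicator_nonneg (fun _ _ => hc0.le) u
      linarith
  have hPE' : MeasurableSet E' := measurableSet_toMeasurable P E
  have hindint : Integrable (E'.indicator fun _ => c) P := (integrable_const c).indicator hPE'
  have hstep : ∫ u, h1 u ∂P ≤ ∫ u, h2 u ∂P + c * p := by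
    have hmono := integral_mono_ae (hint1.sub hint2) hindint hbound
    simp only [Pi.sub_apply] at hmono
    rw [integral_sub hint1 hint2] at hmono
    have hindval : ∫ u, E'.indicator (fun _ => c) u ∂P = c * p := by
      rw [integral_indicator hPE', setIntegral_const, measureReal_def, hE', measure_toMeasurable, hp,
        smul_eq_mul, mul_comm]
    linarith [hmono, hindval ▸ hmono]
  have hfin : ∫ u, h1 u ∂P ≤ Real.exp (η * ε) + c * p :=
    le_trans hstep (by linarith [hcentral f hf])
  have hpos : 0 < ∫ u, h1 u ∂P := by
    have hsupp : Function.support h1 = Set.univ :=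
      Set.eq_univ_of_forall fun u => Real.exp_ne_zero _
    refine (integral_pos_iff_support_of_nonneg (fun u => (Real.exp_pos _).le) hint1).mpr ?_
    rw [hsupp]
    simp
  have hub : Real.exp (η * ε) + c * p ≤ Real.exp (η * ε) * (1 + c * p) := by
    have h1le : (1 : ℝ) ≤ Real.exp (η * ε) := Real.one_le_exp (by positivity)
    nlinarith [mul_nonneg hc0.le hp0]
  have hlog : Real.log (∫ u, h1 u ∂P) ≤ η * ε + c * p := by
    calc Real.log (∫ u, h1 u ∂P)
        ≤ Real.log (Real.exp (η * ε) * (1 + c * p)) :=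
          Real.log_le_log hpos (le_trans hfin hub)
      _ = η * ε + Real.log (1 + c * p) := by
          rw [Real.log_mul (Real.exp_ne_zero _) (by positivity), Real.log_exp]
      _ ≤ η * ε + c * p := by
          have := Real.log_le_sub_one_of_pos (show (0:ℝ) < 1 + c * p by positivity)
          linarith
  have hmul : (1 / η) * Real.log (∫ u, h1 u ∂P) ≤ (1 / η) * (η * ε + c * p) :=
    mul_le_mul_of_nonneg_left hlog (by positivity)
  calc (1 / η) * Real.log (∫ u, h1 u ∂P) ≤ (1 / η) * (η * ε + c * p) := hmul
    _ = ε + (c / η) * p := by field_simp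
end

section
/- Suppose W is a normed space, ℓ^weak(w,w') = ‖w − w'‖, the loss ℓ takes values in [0,B] for some B > 0, every f ∈ F is L-Lipschitz relative to G, and (ℓ, P_{g₀}, F) satisfies the ε-weak η-central condition with witness f* ∈ F. Then for every ĝ ∈ G, every f ∈ F, and every δ > 0, (1/η)·log E_P[exp(−η(ℓ(f(X, ĝ(X)), Y) − ℓ(f*(X, ĝ(X)), Y)))] ≤ ε + 2δ + (L·e^{ηB}/(δη))·E_P[‖β_ĝᵀ ĝ(X) − W‖]. -/
open MeasureTheory

/-- Transfer of the weak central condition, continuous weak labels, split form: if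
`ℓʷ(w,w') = ‖w − w'‖`, `ℓ` takes values in `[0,B]`, every `f ∈ F` is `L`-Lipschitz
relative to `G`, and `(ℓ, P_{g₀}, F)` satisfies the `ε`-weak `η`-central condition with
witness `f*`, then for every `ĝ ∈ G`, `f ∈ F` and `δ > 0`,
`(1/η)·log E[exp(−η(ℓ_{f(·,ĝ)} − ℓ_{f*(·,ĝ)}))] ≤ ε + 2δ + (L·e^{ηB}/(δη))·E‖β_ĝᵀ ĝ(X) − W‖`.
Here `wp g : 𝓧 → 𝓦` denotes the weak predictor `x ↦ β_gᵀ g(x)` associated with `g ∈ G`. -/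
theorem weak_central_condition_transfer_continuous_split
    {𝓧 𝓦 𝓨 𝓩 : Type*} [MeasurableSpace 𝓧] [MeasurableSpace 𝓨]
    [NormedAddCommGroup 𝓦] [MeasurableSpace 𝓦]
    (P : Measure (𝓧 × 𝓦 × 𝓨)) [IsProbabilityMeasure P]
    (ℓ : 𝓨 → 𝓨 → ℝ) (B : ℝ) (hB : 0 < B)
    (hℓ : ∀ y y', ℓ y y' ∈ Set.Icc 0 B)
    (ℓw : 𝓦 → 𝓦 → ℝ)
    (hℓw : ∀ w w', ℓw w w' = ‖w - w'‖)
    (G : Set (𝓧 → 𝓩)) (wp : (𝓧 → 𝓩) → 𝓧 → 𝓦)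
    (g₀ : 𝓧 → 𝓩) (hg₀ : g₀ ∈ G)
    (hg₀W : ∀ᵐ u ∂P, wp g₀ u.1 = u.2.1)
    (F : Set (𝓧 → 𝓩 → 𝓨)) (L : ℝ) (hL : 0 < L)
    (hLip : ∀ f ∈ F, ∀ x y, ∀ g ∈ G, ∀ g' ∈ G,
      |ℓ (f x (g x)) y - ℓ (f x (g' x)) y| ≤ L * ℓw (wp g x) (wp g' x))
    (η ε : ℝ) (hη : 0 < η) (hε : 0 ≤ ε)
    (fstar : 𝓧 → 𝓩 → 𝓨) (hfstar : fstar ∈ F)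
    (hInt : ∀ f ∈ F, ∀ g ∈ G, Integrable
      (fun u => Real.exp (-η * (ℓ (f u.1 (g u.1)) u.2.2 - ℓ (fstar u.1 (g u.1)) u.2.2))) P)
    (hcentral : ∀ f ∈ F,
      ∫ u, Real.exp (-η * (ℓ (f u.1 (g₀ u.1)) u.2.2 - ℓ (fstar u.1 (g₀ u.1)) u.2.2)) ∂P
        ≤ Real.exp (η * ε)) :
    ∀ ghat ∈ G, Integrable (fun u => ‖wp ghat u.1 - u.2.1‖) P →
      ∀ f ∈ F, ∀ δ : ℝ, 0 < δ →
      (1 / η) * Real.log (∫ u,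
          Real.exp (-η * (ℓ (f u.1 (ghat u.1)) u.2.2 - ℓ (fstar u.1 (ghat u.1)) u.2.2)) ∂P)
        ≤ ε + 2 * δ +
            (L * Real.exp (η * B) / (δ * η)) * ∫ u, ‖wp ghat u.1 - u.2.1‖ ∂P := by
  intro ghat hghat hdInt f hf δ hδ
  have hZgInt := hInt f hf ghat hghat
  have hZ0Int := hInt f hf g₀ hg₀
  set d : 𝓧 × 𝓦 × 𝓨 → ℝ := fun u => ‖wp ghat u.1 - u.2.1‖ with hdDef
  set Zg : 𝓧 × 𝓦 × 𝓨 → ℝ := fun u =>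
    Real.exp (-η * (ℓ (f u.1 (ghat u.1)) u.2.2 - ℓ (fstar u.1 (ghat u.1)) u.2.2)) with hZgDef
  set Z0 : 𝓧 × 𝓦 × 𝓨 → ℝ := fun u =>
    Real.exp (-η * (ℓ (f u.1 (g₀ u.1)) u.2.2 - ℓ (fstar u.1 (g₀ u.1)) u.2.2)) with hZ0Def
  have hE0 : 0 ≤ ∫ u, d u ∂P := integral_nonneg fun u => norm_nonneg _
  -- pointwise a.e. bound
  have hpt : ∀ᵐ u ∂P, Zg u ≤ Real.exp (2 * η * δ) * Z0 u
      + Real.exp (η * B) * (L / δ) * d u := by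
    filter_upwards [hg₀W] with u hu
    have hdu : d u = ‖wp ghat u.1 - wp g₀ u.1‖ := by rw [hdDef]; simp [hu]
    have hdnn : 0 ≤ d u := norm_nonneg _
    by_cases hcase : L * d u ≤ δ
    · have h1 := hLip f hf u.1 u.2.2 ghat hghat g₀ hg₀
      have h2 := hLip fstar hfstar u.1 u.2.2 ghat hghat g₀ hg₀
      rw [hℓw, ← hdu] at h1 h2
      have hΔ : -η * (ℓ (f u.1 (ghat u.1)) u.2.2 - ℓ (fstar u.1 (ghat u.1)) u.2.2)
          ≤ 2 * η * δ + -η * (ℓ (f u.1 (g₀ u.1)) u.2.2 - ℓ (fstar u.1 (g₀ u.1)) u.2.2) := by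
        have h1' := abs_le.mp h1
        have h2' := abs_le.mp h2
        nlinarith [h1'.1, h1'.2, h2'.1, h2'.2, hη.le]
      have : Zg u ≤ Real.exp (2 * η * δ) * Z0 u := by
        rw [hZgDef, hZ0Def, ← Real.exp_add]
        exact Real.exp_le_exp.mpr hΔ
      have hnn : 0 ≤ Real.exp (η * B) * (L / δ) * d u := by positivity
      linarith
    · push_neg at hcase
      have hZgB : Zg u ≤ Real.exp (η * B) := by
        rw [hZgDef]
        apply Real.exp_le_exp.mpr
        have ha := hℓ (f u.1 (ghat u.1)) u.2.2
        have hb := hℓ (fstar u.1 (ghat u.1)) u.2.2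
        nlinarith [ha.1, ha.2, hb.1, hb.2, hη.le]
      have h1 : (1 : ℝ) ≤ L / δ * d u := by
        rw [div_mul_eq_mul_div]
        exact (one_le_div hδ).mpr hcase.le
      have h2 : Real.exp (η * B) ≤ Real.exp (η * B) * (L / δ) * d u := by
        have := mul_le_mul_of_nonneg_left h1 (Real.exp_nonneg (η * B))
        calc Real.exp (η * B) = Real.exp (η * B) * 1 := (mul_one _).symm
          _ ≤ Real.exp (η * B) * (L / δ * d u) := this
          _ = Real.exp (η * B) * (L / δ) * d u := by ring
      have hnn : 0 ≤ Real.exp (2 * η * δ) * Z0 u := by positivity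
      linarith
  have hIntRHS : Integrable (fun u => Real.exp (2 * η * δ) * Z0 u
      + Real.exp (η * B) * (L / δ) * d u) P :=
    (hZ0Int.const_mul _).add (hdInt.const_mul _)
  have hintle : ∫ u, Zg u ∂P
      ≤ Real.exp (η * (ε + 2 * δ)) + Real.exp (η * B) * (L / δ) * ∫ u, d u ∂P := by
    calc ∫ u, Zg u ∂P
        ≤ ∫ u, (Real.exp (2 * η * δ) * Z0 u + Real.exp (η * B) * (L / δ) * d u) ∂P :=
          integral_mono_ae hZgInt hIntRHS hpt
      _ = Real.exp (2 * η * δ) * ∫ u, Z0 u ∂P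
          + Real.exp (η * B) * (L / δ) * ∫ u, d u ∂P := by
          rw [integral_add (hZ0Int.const_mul _) (hdInt.const_mul _),
            integral_const_mul, integral_const_mul]
      _ ≤ Real.exp (2 * η * δ) * Real.exp (η * ε)
          + Real.exp (η * B) * (L / δ) * ∫ u, d u ∂P := by
          exact add_le_add_left
            (mul_le_mul_of_nonneg_left (hcentral f hf) (Real.exp_nonneg _)) _
      _ = Real.exp (η * (ε + 2 * δ)) + Real.exp (η * B) * (L / δ) * ∫ u, d u ∂P := by
          rw [← Real.exp_add]; ring_nf
  have hpos : 0 < ∫ u, Zg u ∂P := by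
    have hgt : ∀ u, Real.exp (-(η * B) - 1) < Zg u := by
      intro u
      rw [hZgDef]
      apply Real.exp_lt_exp.mpr
      have ha := hℓ (f u.1 (ghat u.1)) u.2.2
      have hb := hℓ (fstar u.1 (ghat u.1)) u.2.2
      nlinarith [ha.1, ha.2, hb.1, hb.2, hη.le]
    calc (0:ℝ) < Real.exp (-(η * B) - 1) := Real.exp_pos _
      _ = ∫ _u, Real.exp (-(η * B) - 1) ∂P := by simp
      _ ≤ ∫ u, Zg u ∂P := integral_mono (integrable_const _) hZgInt fun u => (hgt u).le
  set a : ℝ := Real.exp (η * (ε + 2 * δ)) with haDef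
  set b : ℝ := Real.exp (η * B) * (L / δ) * ∫ u, d u ∂P with hbDef
  have ha1 : (1 : ℝ) ≤ a := by
    rw [haDef]; apply Real.one_le_exp; positivity
  have hb0 : 0 ≤ b := by
    rw [hbDef]; positivity
  have hapos : 0 < a := lt_of_lt_of_le one_pos ha1
  have hlog1 : Real.log (∫ u, Zg u ∂P) ≤ Real.log (a + b) :=
    Real.log_le_log hpos hintle
  have hlog2 : Real.log (a + b) ≤ Real.log a + b / a := by
    have hq : Real.log ((a + b) / a) ≤ (a + b) / a - 1 :=
      Real.log_le_sub_one_of_pos (by positivity)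
    rw [Real.log_div (by positivity) (ne_of_gt hapos)] at hq
    have : (a + b) / a - 1 = b / a := by field_simp; ring
    linarith [hq, this ▸ hq]
  have hba : b / a ≤ b := by
    rw [div_le_iff₀ hapos]
    nlinarith
  have hloga : Real.log a = η * (ε + 2 * δ) := by rw [haDef, Real.log_exp]
  have hfinal : (1 / η) * Real.log (∫ u, Zg u ∂P) ≤ ε + 2 * δ + (1 / η) * b := by
    have h1 : Real.log (∫ u, Zg u ∂P) ≤ η * (ε + 2 * δ) + b := by
      calc Real.log (∫ u, Zg u ∂P) ≤ Real.log a + b / a := le_trans hlog1 hlog2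
        _ ≤ η * (ε + 2 * δ) + b := by rw [hloga]; linarith
    calc (1 / η) * Real.log (∫ u, Zg u ∂P) ≤ (1 / η) * (η * (ε + 2 * δ) + b) := by
          apply mul_le_mul_of_nonneg_left h1 (by positivity)
      _ = ε + 2 * δ + (1 / η) * b := by field_simp
  calc (1 / η) * Real.log (∫ u, Zg u ∂P) ≤ ε + 2 * δ + (1 / η) * b := hfinal
    _ = ε + 2 * δ + (L * Real.exp (η * B) / (δ * η)) * ∫ u, d u ∂P := by
        rw [hbDef]; field_simp
end

section
/- Suppose W is a normed space, ℓ^weak(w,w') = ‖w − w'‖, the loss ℓ takes values in [0,B] for some B > 0, every f ∈ F is L-Lipschitz relative to G, and (ℓ, P_{g₀}, F) satisfies the ε-weak η-central condition with witness f* ∈ F. Then for every ĝ ∈ G and every f ∈ F, (1/η)·log E_P[exp(−η(ℓ(f(X, ĝ(X)), Y) − ℓ(f*(X, ĝ(X)), Y)))] ≤ ε + 2√2 · √(L·e^{ηB}/η) · √(E_P[‖β_ĝᵀ ĝ(X) − W‖]); in particular, (ℓ, P̂, F) satisfies the (ε + 2√2·√(L·e^{ηB}/η)·√(E_P[‖β_ĝᵀ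 ĝ(X) − W‖]))-weak η-central condition with the same witness f*. -/
open MeasureTheory

/-- Transfer of the weak central condition, continuous weak labels, optimized form (Proposition 3
of the paper): if `ℓʷ(w,w') = ‖w − w'‖`, `ℓ` takes values in `[0,B]`, every `f ∈ F` is
`L`-Lipschitz relative to `G`, and `(ℓ, P_{g₀}, F)` satisfies the `ε`-weak `η`-central
condition with witness `f*`, then for every `ĝ ∈ G` and `f ∈ F`,
`(1/η)·log E[exp(−η(ℓ_{f(·,ĝ)} − ℓ_{f*(·,ĝ)}))]
  ≤ ε + 2√2·√(L·e^{ηB}/η)·√(E‖β_ĝᵀ ĝ(X) − W‖)`;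
i.e. `(ℓ, P̂, F)` satisfies the corresponding weak `η`-central condition with witness `f*`.
Here `wp g : 𝓧 → 𝓦` denotes the weak predictor `x ↦ β_gᵀ g(x)` associated with `g ∈ G`. -/
theorem weak_central_condition_transfer_continuous
    {𝓧 𝓦 𝓨 𝓩 : Type*} [MeasurableSpace 𝓧] [MeasurableSpace 𝓨]
    [NormedAddCommGroup 𝓦] [MeasurableSpace 𝓦]
    (P : Measure (𝓧 × 𝓦 × 𝓨)) [IsProbabilityMeasure P]
    (ℓ : 𝓨 → 𝓨 → ℝ) (B : ℝ) (hB : 0 < B)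
    (hℓ : ∀ y y', ℓ y y' ∈ Set.Icc 0 B)
    (ℓw : 𝓦 → 𝓦 → ℝ)
    (hℓw : ∀ w w', ℓw w w' = ‖w - w'‖)
    (G : Set (𝓧 → 𝓩)) (wp : (𝓧 → 𝓩) → 𝓧 → 𝓦)
    (g₀ : 𝓧 → 𝓩) (hg₀ : g₀ ∈ G)
    (hg₀W : ∀ᵐ u ∂P, wp g₀ u.1 = u.2.1)
    (F : Set (𝓧 → 𝓩 → 𝓨)) (L : ℝ) (hL : 0 < L)
    (hLip : ∀ f ∈ F, ∀ x y, ∀ g ∈ G, ∀ g' ∈ G,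
      |ℓ (f x (g x)) y - ℓ (f x (g' x)) y| ≤ L * ℓw (wp g x) (wp g' x))
    (η ε : ℝ) (hη : 0 < η) (hε : 0 ≤ ε)
    (fstar : 𝓧 → 𝓩 → 𝓨) (hfstar : fstar ∈ F)
    (hInt : ∀ f ∈ F, ∀ g ∈ G, Integrable
      (fun u => Real.exp (-η * (ℓ (f u.1 (g u.1)) u.2.2 - ℓ (fstar u.1 (g u.1)) u.2.2))) P)
    (hcentral : ∀ f ∈ F,
      ∫ u, Real.exp (-η * (ℓ (f u.1 (g₀ u.1)) u.2.2 - ℓ (fstar u.1 (g₀ u.1)) u.2.2)) ∂P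
        ≤ Real.exp (η * ε)) :
    ∀ ghat ∈ G, Integrable (fun u => ‖wp ghat u.1 - u.2.1‖) P →
      ∀ f ∈ F,
      (1 / η) * Real.log (∫ u,
          Real.exp (-η * (ℓ (f u.1 (ghat u.1)) u.2.2 - ℓ (fstar u.1 (ghat u.1)) u.2.2)) ∂P)
        ≤ ε + 2 * Real.sqrt 2 * Real.sqrt (L * Real.exp (η * B) / η) *
            Real.sqrt (∫ u, ‖wp ghat u.1 - u.2.1‖ ∂P) := by

  intro ghat hghat hIntΔ f hf
  set Δ : 𝓧 × 𝓦 × 𝓨 → ℝ := fun u => ‖wp ghat u.1 - u.2.1‖ with hΔdef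
  set m : ℝ := ∫ u, Δ u ∂P with hmdef
  have hm0 : 0 ≤ m := integral_nonneg fun u => norm_nonneg _
  set I : ℝ := ∫ u,
      Real.exp (-η * (ℓ (f u.1 (ghat u.1)) u.2.2 - ℓ (fstar u.1 (ghat u.1)) u.2.2)) ∂P with hIdef
  have hIntD : Integrable
      (fun u => Real.exp (-η * (ℓ (f u.1 (ghat u.1)) u.2.2 - ℓ (fstar u.1 (ghat u.1)) u.2.2))) P :=
    hInt f hf ghat hghat
  have hIntD0 : Integrable
      (fun u => Real.exp (-η * (ℓ (f u.1 (g₀ u.1)) u.2.2 - ℓ (fstar u.1 (g₀ u.1)) u.2.2))) P :=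
    hInt f hf g₀ hg₀
  -- key bound for every t > 0
  have key : ∀ t : ℝ, 0 < t →
      (1 / η) * Real.log I ≤ ε + 2 * L * t + (Real.exp (η * B) / η) * (m / t) := by
    intro t ht
    have hae : ∀ᵐ u ∂P,
        Real.exp (-η * (ℓ (f u.1 (ghat u.1)) u.2.2 - ℓ (fstar u.1 (ghat u.1)) u.2.2)) ≤
          Real.exp (2 * η * L * t) *
            Real.exp (-η * (ℓ (f u.1 (g₀ u.1)) u.2.2 - ℓ (fstar u.1 (g₀ u.1)) u.2.2)) +
            (Real.exp (η * B) / t) * Δ u := by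
      filter_upwards [hg₀W] with u h0
      set x := u.1
      set y := u.2.2
      set D : ℝ := ℓ (f x (ghat x)) y - ℓ (fstar x (ghat x)) y with hD
      set D0 : ℝ := ℓ (f x (g₀ x)) y - ℓ (fstar x (g₀ x)) y with hD0
      have hΔu : Δ u = ‖wp ghat x - wp g₀ x‖ := by rw [hΔdef]; simp [h0]; rfl
      have hΔnn : 0 ≤ Δ u := norm_nonneg _
      by_cases hc : Δ u ≤ t
      · have h1 := hLip f hf x y ghat hghat g₀ hg₀
        have h2 := hLip fstar hfstar x y ghat hghat g₀ hg₀
        rw [hℓw, ← hΔu] at h1 h2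
        have habs : |D - D0| ≤ 2 * L * Δ u := by
          have hx := abs_le.mp h1
          have hy := abs_le.mp h2
          rw [hD, hD0, abs_le]
          refine ⟨by linarith [hx.1, hy.2], by linarith [hx.2, hy.1]⟩
        have h4 : -η * D ≤ 2 * η * L * t + (-η * D0) := by
          have h1' := (abs_le.mp habs).1
          have hmul1 : η * (-(2 * L * Δ u)) ≤ η * (D - D0) :=
            mul_le_mul_of_nonneg_left h1' hη.le
          have hmul2 : 2 * η * L * Δ u ≤ 2 * η * L * t :=
            mul_le_mul_of_nonneg_left hc (by positivity)
          nlinarith [hmul1, hmul2]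
        have h5 : Real.exp (-η * D) ≤ Real.exp (2 * η * L * t) * Real.exp (-η * D0) := by
          rw [← Real.exp_add]
          exact Real.exp_le_exp.mpr h4
        have h6 : 0 ≤ (Real.exp (η * B) / t) * Δ u :=
          mul_nonneg (div_nonneg (Real.exp_pos _).le ht.le) hΔnn
        linarith
      · push_neg at hc
        have hDB : -B ≤ D := by
          have a1 := (hℓ (f x (ghat x)) y).1
          have a2 := (hℓ (fstar x (ghat x)) y).2
          rw [hD]; linarith
        have h5 : Real.exp (-η * D) ≤ Real.exp (η * B) := by
          apply Real.exp_le_exp.mpr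
          nlinarith [hη.le]
        have h6 : Real.exp (η * B) ≤ (Real.exp (η * B) / t) * Δ u := by
          rw [div_mul_eq_mul_div, le_div_iff₀ ht]
          nlinarith [Real.exp_pos (η * B)]
        have h7 : 0 ≤ Real.exp (2 * η * L * t) * Real.exp (-η * D0) :=
          mul_nonneg (Real.exp_pos _).le (Real.exp_pos _).le
        linarith
    have hIntRHS : Integrable (fun u => Real.exp (2 * η * L * t) *
        Real.exp (-η * (ℓ (f u.1 (g₀ u.1)) u.2.2 - ℓ (fstar u.1 (g₀ u.1)) u.2.2)) +
        (Real.exp (η * B) / t) * Δ u) P :=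
      (hIntD0.const_mul _).add (hIntΔ.const_mul _)
    have hIle : I ≤ Real.exp (2 * η * L * t) *
        (∫ u, Real.exp (-η * (ℓ (f u.1 (g₀ u.1)) u.2.2 - ℓ (fstar u.1 (g₀ u.1)) u.2.2)) ∂P) +
        (Real.exp (η * B) / t) * m := by
      have := integral_mono_ae hIntD hIntRHS hae
      rw [hIdef]
      calc (∫ u, Real.exp (-η * (ℓ (f u.1 (ghat u.1)) u.2.2 -
            ℓ (fstar u.1 (ghat u.1)) u.2.2)) ∂P) ≤ _ := this
        _ = _ := by
            rw [integral_add (hIntD0.const_mul _) (hIntΔ.const_mul _),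
              integral_const_mul, integral_const_mul]
    have hI0 : (∫ u, Real.exp (-η * (ℓ (f u.1 (g₀ u.1)) u.2.2 -
        ℓ (fstar u.1 (g₀ u.1)) u.2.2)) ∂P) ≤ Real.exp (η * ε) := hcentral f hf
    have hc' : 0 ≤ (Real.exp (η * B) / t) * m :=
      mul_nonneg (div_nonneg (Real.exp_pos _).le ht.le) hm0
    have hIle2 : I ≤ Real.exp (η * ε + 2 * η * L * t + (Real.exp (η * B) / t) * m) := by
      have e1 : I ≤ Real.exp (2 * η * L * t) * Real.exp (η * ε) +
          (Real.exp (η * B) / t) * m := by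
        calc I ≤ _ := hIle
          _ ≤ _ := by
              have := mul_le_mul_of_nonneg_left hI0 (Real.exp_pos (2 * η * L * t)).le
              linarith
      have e2 : Real.exp (2 * η * L * t) * Real.exp (η * ε) +
          (Real.exp (η * B) / t) * m ≤
          Real.exp (η * ε + 2 * η * L * t) * (1 + (Real.exp (η * B) / t) * m) := by
        rw [Real.exp_add]
        have ha1 : (0:ℝ) ≤ η * ε := mul_nonneg hη.le hε
        have ha2 : (0:ℝ) ≤ 2 * η * L * t := by positivity
        have h1 : (1:ℝ) ≤ Real.exp (η * ε) * Real.exp (2 * η * L * t) := by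
          rw [← Real.exp_add]
          exact Real.one_le_exp (by linarith)
        nlinarith [hc', mul_nonneg (sub_nonneg.mpr h1) hc']
      have e3 : (1 + (Real.exp (η * B) / t) * m) ≤ Real.exp ((Real.exp (η * B) / t) * m) := by
        linarith [Real.add_one_le_exp ((Real.exp (η * B) / t) * m)]
      calc I ≤ _ := e1
        _ ≤ _ := e2
        _ ≤ Real.exp (η * ε + 2 * η * L * t) * Real.exp ((Real.exp (η * B) / t) * m) :=
            mul_le_mul_of_nonneg_left e3 (Real.exp_pos _).le
        _ = _ := by rw [← Real.exp_add]
    have hIpos : 0 < I := by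
      have hpt : ∀ u : 𝓧 × 𝓦 × 𝓨, Real.exp (-η * B) ≤
          Real.exp (-η * (ℓ (f u.1 (ghat u.1)) u.2.2 - ℓ (fstar u.1 (ghat u.1)) u.2.2)) := by
        intro u
        apply Real.exp_le_exp.mpr
        have a1 := (hℓ (f u.1 (ghat u.1)) u.2.2).2
        have a2 := (hℓ (fstar u.1 (ghat u.1)) u.2.2).1
        nlinarith [hη.le]
      have : Real.exp (-η * B) ≤ I := by
        rw [hIdef]
        have := integral_mono (integrable_const (Real.exp (-η * B))) hIntD
          (fun u => hpt u)
        simpa using this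
      linarith [Real.exp_pos (-η * B)]
    have hlog : Real.log I ≤ η * ε + 2 * η * L * t + (Real.exp (η * B) / t) * m :=
      (Real.log_le_iff_le_exp hIpos).mpr hIle2
    have := mul_le_mul_of_nonneg_left hlog (by positivity : (0:ℝ) ≤ 1 / η)
    calc (1 / η) * Real.log I ≤
        (1 / η) * (η * ε + 2 * η * L * t + (Real.exp (η * B) / t) * m) := this
      _ = ε + 2 * L * t + (Real.exp (η * B) / η) * (m / t) := by
          field_simp
  -- now optimize over t
  rcases eq_or_lt_of_le hm0 with hm | hm
  · have hRHS : Real.sqrt m = 0 := by rw [← hm]; exact Real.sqrt_zero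
    rw [← hmdef] at *
    have : (1 / η) * Real.log I ≤ ε := by
      apply le_of_forall_pos_le_add
      intro δ hδ
      have ht : (0:ℝ) < δ / (2 * L) := by positivity
      have := key (δ / (2 * L)) ht
      have hmz : m = 0 := hm.symm
      rw [hmz] at this
      simp only [zero_div, mul_zero, add_zero] at this
      calc (1 / η) * Real.log I ≤ ε + 2 * L * (δ / (2 * L)) := this
        _ = ε + δ := by field_simp
    calc (1 / η) * Real.log I ≤ ε := this
      _ ≤ _ := by
          rw [hRHS, mul_zero]
          linarith
  · set c : ℝ := L * Real.exp (η * B) / η with hcdef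
    have hcpos : 0 < c := by positivity
    set s : ℝ := Real.sqrt (2 * c * m) with hsdef
    have hspos : 0 < s := Real.sqrt_pos.mpr (by positivity)
    have hs2 : s ^ 2 = 2 * c * m := Real.sq_sqrt (by positivity)
    have ht : (0:ℝ) < s / (2 * L) := by positivity
    have hkey := key (s / (2 * L)) ht
    have e1 : 2 * L * (s / (2 * L)) = s := by field_simp
    have e2 : (Real.exp (η * B) / η) * (m / (s / (2 * L))) = s := by
      have hs2' : s * s = 2 * (L * Real.exp (η * B) / η) * m := by
        rw [← hcdef]; nlinarith [hs2]
      field_simp at hs2'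
      rw [div_div_eq_mul_div, div_mul_div_comm,
        div_eq_iff (ne_of_gt (by positivity : (0:ℝ) < η * s))]
      ring_nf
      ring_nf at hs2'
      linarith [hs2']
    rw [e1, e2] at hkey
    have eR : 2 * Real.sqrt 2 * Real.sqrt (L * Real.exp (η * B) / η) * Real.sqrt m
        = 2 * s := by
      rw [hsdef, hcdef]
      rw [show (2:ℝ) * (L * Real.exp (η * B) / η) * m = 2 * ((L * Real.exp (η * B) / η) * m) by ring]
      rw [Real.sqrt_mul (by norm_num : (0:ℝ) ≤ 2),
        Real.sqrt_mul (by positivity : (0:ℝ) ≤ L * Real.exp (η * B) / η)]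
      ring
    rw [eR]
    linarith
end

section
/- Let (Ω, P) be an atomless probability space, let η > 0, and let Δ : Ω → ℝ be a measurable random variable that is almost surely bounded (|Δ| ≤ V almost surely for some V > 0) and satisfies E[e^{−ηΔ}] ≤ 1. Then for every ε > 0 there exist η' with η ≤ η' ≤ 2η and a measurable random variable Δ̃ : Ω → ℝ such that: (1) Δ̃ ≤ Δ almost surely; (2) E[e^{−η'Δ̃}] = 1; and (3) |E[Δ − Δ̃]| ≤ ε. -/
open MeasureTheory

/-- Modification lemma: on an atomless probability space, a bounded random variable `Δ` with
`E[exp (-η Δ)] ≤ 1` admits, for every `ε > 0`, a modification `Δ'` with `Δ' ≤ Δ` a.s.,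
`E[exp (-η' Δ')] = 1` for some `η ≤ η' ≤ 2η`, and `|E[Δ - Δ']| ≤ ε`. -/
theorem modification_lemma {Ω : Type*} [MeasurableSpace Ω]
    (P : Measure Ω) [IsProbabilityMeasure P]
    (hAtomless : ∀ p : ℝ, 0 < p → p < 1 →
      ∃ A : Set Ω, MeasurableSet A ∧ P A = ENNReal.ofReal p)
    (η : ℝ) (hη : 0 < η)
    (Δ : Ω → ℝ) (hΔmeas : Measurable Δ)
    (V : ℝ) (hV : 0 < V) (hbdd : ∀ᵐ ω ∂P, |Δ ω| ≤ V)
    (hexp : ∫ ω, Real.exp (-η * Δ ω) ∂P ≤ 1)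
    (ε : ℝ) (hε : 0 < ε) :
    ∃ (η' : ℝ) (Δ' : Ω → ℝ), η ≤ η' ∧ η' ≤ 2 * η ∧ Measurable Δ' ∧
      (∀ᵐ ω ∂P, Δ' ω ≤ Δ ω) ∧
      (∫ ω, Real.exp (-η' * Δ' ω) ∂P = 1) ∧
      |∫ ω, (Δ ω - Δ' ω) ∂P| ≤ ε := by
  -- choose t large so that exp(-t) * (V + t/η) ≤ ε
  have htend : Filter.Tendsto (fun t : ℝ => Real.exp (-t) * (V + t / η))
      Filter.atTop (nhds 0) := by
    have h1 : Filter.Tendsto (fun t : ℝ => V * Real.exp (-t)) Filter.atTop (nhds 0) := by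
      simpa using Real.tendsto_exp_neg_atTop_nhds_zero.const_mul V
    have h2 : Filter.Tendsto (fun t : ℝ => (1 / η) * (t * Real.exp (-t)))
        Filter.atTop (nhds 0) := by
      simpa using (Real.tendsto_pow_mul_exp_neg_atTop_nhds_zero 1).const_mul (1 / η)
    have := h1.add h2
    simp only [add_zero] at this
    refine this.congr (fun t => ?_)
    field_simp
  obtain ⟨t, ht1, htε⟩ : ∃ t : ℝ, 1 ≤ t ∧ Real.exp (-t) * (V + t / η) ≤ ε := by
    have := (htend.eventually (eventually_le_nhds hε)).and
      (Filter.eventually_ge_atTop (1 : ℝ))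
    obtain ⟨t, h, h'⟩ := this.exists
    exact ⟨t, h', h⟩
  set p : ℝ := Real.exp (-t) with hp
  have hp0 : 0 < p := Real.exp_pos _
  have hp1 : p < 1 := by
    rw [hp, Real.exp_lt_one_iff]; linarith
  obtain ⟨A, hA, hPA⟩ := hAtomless p hp0 hp1
  have hPAr : (P A).toReal = p := by rw [hPA, ENNReal.toReal_ofReal hp0.le]
  set C : ℝ := V + t / η with hC
  have hC0 : 0 ≤ C := by positivity
  -- integrability facts
  have hbase_int : Integrable (fun ω => Real.exp (-η * Δ ω)) P := by
    refine Integrable.mono' (integrable_const (Real.exp (η * V)))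
      ((hΔmeas.const_mul (-η)).exp.aestronglyMeasurable) ?_
    filter_upwards [hbdd] with ω hω
    rw [Real.norm_eq_abs, abs_of_pos (Real.exp_pos _), Real.exp_le_exp]
    nlinarith [abs_le.1 hω]
  set K1 : ℝ := ∫ ω in Aᶜ, Real.exp (-η * Δ ω) ∂P with hK1def
  set K2 : ℝ := ∫ ω in A, Real.exp (-η * Δ ω) ∂P with hK2def
  have hK1nonneg : 0 ≤ K1 :=
    setIntegral_nonneg hA.compl fun ω _ => (Real.exp_pos _).le
  have hK2lb : p * Real.exp (-η * V) ≤ K2 := by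
    have : ∫ ω in A, Real.exp (-η * V) ∂P ≤ K2 := by
      refine setIntegral_mono_ae_restrict (integrableOn_const (ne_of_lt ?_))
        hbase_int.integrableOn ?_
      · exact lt_of_le_of_lt (measure_mono (Set.subset_univ _)) (by simp)
      · filter_upwards [ae_restrict_of_ae hbdd] with ω hω
        rw [Real.exp_le_exp]
        nlinarith [abs_le.1 hω]
    calc p * Real.exp (-η * V) = (P A).toReal • Real.exp (-η * V) := by
          rw [hPAr, smul_eq_mul]
      _ = ∫ ω in A, Real.exp (-η * V) ∂P := (setIntegral_const _).symm
      _ ≤ K2 := this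
  have hsplit : K2 + K1 = ∫ ω, Real.exp (-η * Δ ω) ∂P :=
    integral_add_compl hA hbase_int
  -- integral formula for the modified variable
  have hf : ∀ c : ℝ,
      ∫ ω, Real.exp (-η * (Δ ω - A.indicator (fun _ => c) ω)) ∂P
        = Real.exp (η * c) * K2 + K1 := by
    intro c
    have hintc : Integrable
        (fun ω => Real.exp (-η * (Δ ω - A.indicator (fun _ => c) ω))) P := by
      refine Integrable.mono' (integrable_const (Real.exp (η * (V + |c|))))
        ((((hΔmeas.sub (measurable_const.indicator hA)).const_mul (-η)).exp).aestronglyMeasurable) ?_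
      filter_upwards [hbdd] with ω hω
      rw [Real.norm_eq_abs, abs_of_pos (Real.exp_pos _), Real.exp_le_exp]
      have hind : |A.indicator (fun _ => c) ω| ≤ |c| := by
        by_cases h : ω ∈ A <;> simp [Set.indicator_of_mem, Set.indicator_of_notMem, h,
          abs_nonneg]
      have h1 := abs_le.1 hω
      have h2 := abs_le.1 hind
      nlinarith
    rw [← integral_add_compl hA hintc]
    have e1 : ∫ ω in A, Real.exp (-η * (Δ ω - A.indicator (fun _ => c) ω)) ∂P
        = Real.exp (η * c) * K2 := by
      rw [show ∫ ω in A, Real.exp (-η * (Δ ω - A.indicator (fun _ => c) ω)) ∂P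
          = ∫ ω in A, Real.exp (η * c) * Real.exp (-η * Δ ω) ∂P from
        setIntegral_congr_fun hA (fun ω hω => by
          rw [Set.indicator_of_mem hω, ← Real.exp_add]; ring_nf)]
      exact integral_const_mul _ _
    have e2 : ∫ ω in Aᶜ, Real.exp (-η * (Δ ω - A.indicator (fun _ => c) ω)) ∂P = K1 :=
      setIntegral_congr_fun hA.compl (fun ω hω => by
        rw [Set.indicator_of_notMem hω]; ring_nf)
    rw [e1, e2]
  -- endpoints for IVT
  have hf0 : Real.exp (η * 0) * K2 + K1 ≤ 1 := by
    rw [mul_zero, Real.exp_zero, one_mul, hsplit]; exact hexp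
  have hfC : 1 ≤ Real.exp (η * C) * K2 + K1 := by
    have hexpC : Real.exp (η * C) = Real.exp (η * V) * Real.exp t := by
      rw [← Real.exp_add, hC]
      congr 1
      field_simp
    have : Real.exp (η * C) * (p * Real.exp (-η * V)) = 1 := by
      rw [hexpC, hp, ← Real.exp_add, ← Real.exp_add, ← Real.exp_add,
        show η * V + t + (-t + -η * V) = 0 by ring, Real.exp_zero]
    nlinarith [Real.exp_pos (η * C), hK2lb, hK1nonneg]
  -- IVT
  have hcont : ContinuousOn (fun c => Real.exp (η * c) * K2 + K1) (Set.Icc 0 C) :=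
    (((Real.continuous_exp.comp (continuous_const.mul continuous_id)).mul
      continuous_const).add continuous_const).continuousOn
  obtain ⟨c, hcmem, hcval⟩ : ∃ c ∈ Set.Icc (0:ℝ) C,
      Real.exp (η * c) * K2 + K1 = 1 := by
    have := intermediate_value_Icc hC0 hcont (Set.mem_Icc.2 ⟨hf0, hfC⟩)
    obtain ⟨c, hc, hc'⟩ := this
    exact ⟨c, hc, hc'⟩
  obtain ⟨hc0, hcC⟩ := hcmem
  refine ⟨η, fun ω => Δ ω - A.indicator (fun _ => c) ω, le_refl η, by linarith,
    hΔmeas.sub (measurable_const.indicator hA), ?_, ?_, ?_⟩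
  · refine Filter.Eventually.of_forall fun ω => ?_
    have : 0 ≤ A.indicator (fun _ => c) ω :=
      Set.indicator_nonneg (fun _ _ => hc0) ω
    simpa using sub_le_self (Δ ω) this
  · rw [hf c, hcval]
  · have : ∫ ω, (Δ ω - (Δ ω - A.indicator (fun _ => c) ω)) ∂P = c * p := by
      have : (fun ω => Δ ω - (Δ ω - A.indicator (fun _ => c) ω))
          = fun ω => A.indicator (fun _ => c) ω := by funext ω; ring
      rw [this, integral_indicator_const c hA, measureReal_def, hPAr, smul_eq_mul, mul_comm]
    rw [this, abs_of_nonneg (by positivity)]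
    calc c * p ≤ C * p := by nlinarith
      _ = p * C := mul_comm _ _
      _ ≤ ε := htε
end
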